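/- Let T1 and T2 be finite sets of TGDs and ΣD, ΣQ schemas. Then T2 is ΣD,ΣQ-CQ-conservative over T1 (T1 ⊨^CQ_{ΣD,ΣQ} T2) if and only if chase_{T2}(D) →^lim_{ΣQ} chase_{T1}(D) for every ΣD-database D. -/

import Mathlib

set_option autoImplicit false

/-! ### Terms: constants from 𝐂 (coded `Term.const n`) and nulls from 𝐍 (coded `Term.null n`) -/

inductive Term : Type
  | const : ℕ → Term
  | null  : ℕ → Term
deriving DecidableEq

def Term.isConst : Term → Prop
  | .const _ => True
  | .null _  => False

def termEquiv : Term ≃ ℕ ⊕ ℕ where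
  toFun t := match t with
    | .const n => Sum.inl n
    | .null n  => Sum.inr n
  invFun x := match x with
    | Sum.inl n => .const n
    | Sum.inr n => .null n
  left_inv t := by cases t <;> rfl
  right_inv x := by cases x <;> rfl

instance : Primcodable Term := Primcodable.ofEquiv _ termEquiv

/-! ### Relation symbols (with arity) and schemas -/

structure RelSym : Type where
  name : ℕ
  arity : ℕ
deriving DecidableEq

def relSymEquiv : RelSym ≃ ℕ × ℕ where
  toFun r := (r.name, r.arity)
  invFun p := ⟨p.1, p.2⟩
  left_inv r := rfl
  right_inv p := rfl

instance : Primcodable RelSym := Primcodable.ofEquiv _ relSymEquiv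

/-- A schema is a set of relation symbols. -/
abbrev Schema := Set RelSym

/-! ### Facts, instances, databases -/

structure Fct : Type where
  rel : RelSym
  args : List Term
deriving DecidableEq

def fctEquiv : Fct ≃ RelSym × List Term where
  toFun f := (f.rel, f.args)
  invFun p := ⟨p.1, p.2⟩
  left_inv f := rfl
  right_inv p := rfl

instance : Primcodable Fct := Primcodable.ofEquiv _ fctEquiv

/-- A fact is well-formed if its argument tuple matches the arity of its relation symbol
(arities are ≥ 1). -/
def Fct.wf (f : Fct) : Prop := f.args.length = f.rel.arity ∧ 1 ≤ f.rel.arity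

/-- An instance is a (possibly infinite) set of facts. -/
abbrev Inst := Set Fct

/-- The active domain of an instance. -/
def adom (I : Inst) : Set Term := { t | ∃ f ∈ I, t ∈ f.args }

/-- A database: a finite instance of well-formed facts using only constants from 𝐂. -/
def IsDB (I : Inst) : Prop :=
  I.Finite ∧ ∀ f ∈ I, f.wf ∧ ∀ t ∈ f.args, t.isConst

/-- `I` is a Σ-instance. -/
def InstOver (I : Inst) (S : Schema) : Prop := ∀ f ∈ I, f.rel ∈ S ∧ f.wf

/-- `I` is a Σ-database. -/
def IsDatabase (I : Inst) (S : Schema) : Prop := IsDB I ∧ ∀ f ∈ I, f.rel ∈ S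

/-! ### Homomorphisms -/

def Fct.map (h : Term → Term) (f : Fct) : Fct := ⟨f.rel, f.args.map h⟩

/-- `h` is a Σ-homomorphism from `I` to `J`. -/
def IsHomOn (S : Schema) (h : Term → Term) (I J : Inst) : Prop :=
  ∀ f ∈ I, f.rel ∈ S → f.map h ∈ J

/-- `h` is a homomorphism from `I` to `J` (all relation symbols). -/
def IsFullHom (h : Term → Term) (I J : Inst) : Prop := ∀ f ∈ I, f.map h ∈ J

/-- `h` is database-preserving: it is the identity on all constants from 𝐂. -/
def DBPres (h : Term → Term) : Prop := ∀ n : ℕ, h (Term.const n) = Term.const n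

/-- `I →_Σ J`: there is a database-preserving Σ-homomorphism from `I` to `J`. -/
def HomTo (S : Schema) (I J : Inst) : Prop := ∃ h, DBPres h ∧ IsHomOn S h I J

/-- The induced subinstance of `I` on a set `A` of terms. -/
def restrict (I : Inst) (A : Set Term) : Inst := { f | f ∈ I ∧ ∀ t ∈ f.args, t ∈ A }

/-- `I →ⁿ_Σ J`: every induced subinstance of `I` with at most `n` active-domain elements
admits a database-preserving Σ-homomorphism to `J`. -/
def HomN (S : Schema) (n : ℕ) (I J : Inst) : Prop :=
  ∀ A : Set Term, A ⊆ adom I → A.Finite → A.ncard ≤ n → HomTo S (restrict I A) J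

/-- `I →^lim_Σ J`. -/
def HomLim (S : Schema) (I J : Inst) : Prop := ∀ n : ℕ, 1 ≤ n → HomN S n I J

/-- Homomorphic equivalence of instances. -/
def HomEquiv (I J : Inst) : Prop := (∃ h, IsFullHom h I J) ∧ (∃ h, IsFullHom h J I)

/-! ### Gaifman graph and connectedness -/

def coOccur (I : Inst) (a b : Term) : Prop := ∃ f ∈ I, a ∈ f.args ∧ b ∈ f.args

/-- The Gaifman graph of `I` is connected. -/
def Connected (I : Inst) : Prop :=
  ∀ a ∈ adom I, ∀ b ∈ adom I, Relation.ReflTransGen (coOccur I) a b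

/-- Restriction `I|_Σ` of `I` to the facts using a relation symbol from Σ. -/
def restrS (I : Inst) (S : Schema) : Inst := { f | f ∈ I ∧ f.rel ∈ S }

/-- `I` is Σ-connected. -/
def SConnected (S : Schema) (I : Inst) : Prop := Connected (restrS I S)

/-- `C` is a maximally Σ-connected component of `I`. -/
def MaxConnComp (S : Schema) (I C : Inst) : Prop :=
  C ⊆ restrS I S ∧ Connected C ∧
    ∀ C', C ⊆ C' → C' ⊆ restrS I S → Connected C' → C' = C

/-! ### Conjunctive queries -/

structure Atom : Type where
  rel : RelSym
  args : List ℕ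
deriving DecidableEq

def atomEquiv : Atom ≃ RelSym × List ℕ where
  toFun a := (a.rel, a.args)
  invFun p := ⟨p.1, p.2⟩
  left_inv a := rfl
  right_inv p := rfl

instance : Primcodable Atom := Primcodable.ofEquiv _ atomEquiv

def Atom.wf (a : Atom) : Prop := a.args.length = a.rel.arity ∧ 1 ≤ a.rel.arity

/-- Instantiate an atom by an assignment of terms to variables. -/
def Atom.inst (h : ℕ → Term) (a : Atom) : Fct := ⟨a.rel, a.args.map h⟩

/-- A conjunctive query: a finite set of relational atoms (as a list) together with a
tuple of answer variables. -/
structure CQ : Type where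
  atoms : List Atom
  ans : List ℕ
deriving DecidableEq

def cqEquiv : CQ ≃ List Atom × List ℕ where
  toFun q := (q.atoms, q.ans)
  invFun p := ⟨p.1, p.2⟩
  left_inv q := rfl
  right_inv p := rfl

instance : Primcodable CQ := Primcodable.ofEquiv _ cqEquiv

/-- `q` is a CQ over schema Σ. -/
def CQ.Over (q : CQ) (S : Schema) : Prop := ∀ a ∈ q.atoms, a.rel ∈ S ∧ a.wf

/-- A homomorphism from `q` to `I`. -/
def CQHom (q : CQ) (I : Inst) (h : ℕ → Term) : Prop := ∀ a ∈ q.atoms, a.inst h ∈ I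

/-- `c̄` is an answer to `q` on `I`. -/
def IsAnswer (q : CQ) (I : Inst) (c : List Term) : Prop :=
  (∀ x ∈ c, x ∈ adom I) ∧ ∃ h, CQHom q I h ∧ q.ans.map h = c

/-- The canonical database of a CQ (variables viewed as constants/nulls). -/
def canonDB (q : CQ) : Inst := { f | ∃ a ∈ q.atoms, f = a.inst Term.null }

/-! ### Tuple-generating dependencies -/

/-- A TGD `∀x̄∀ȳ (φ(x̄,ȳ) → ∃z̄ ψ(x̄,z̄))`, with `frontier` the tuple `x̄` of
frontier variables. -/
structure TGD : Type where
  body : List Atom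
  head : List Atom
  frontier : List ℕ
deriving DecidableEq

def tgdEquiv : TGD ≃ List Atom × List Atom × List ℕ where
  toFun t := (t.body, t.head, t.frontier)
  invFun p := ⟨p.1, p.2.1, p.2.2⟩
  left_inv t := rfl
  right_inv p := rfl

instance : Primcodable TGD := Primcodable.ofEquiv _ tgdEquiv

def TGD.bodyVars (t : TGD) : Set ℕ := { x | ∃ a ∈ t.body, x ∈ a.args }
def TGD.headVars (t : TGD) : Set ℕ := { x | ∃ a ∈ t.head, x ∈ a.args }

/-- Well-formedness of a TGD: atoms are well-formed, the frontier variables are distinct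
body variables, and every variable shared by body and head is a frontier variable. -/
def TGD.wf (t : TGD) : Prop :=
  (∀ a ∈ t.body, a.wf) ∧ (∀ a ∈ t.head, a.wf) ∧ t.frontier.Nodup ∧
  (∀ x ∈ t.frontier, x ∈ t.bodyVars) ∧
  (∀ x, x ∈ t.bodyVars → x ∈ t.headVars → x ∈ t.frontier)

/-- A TGD is linear if its body contains at most one atom. -/
def TGD.Linear (t : TGD) : Prop := t.body.length ≤ 1

/-- A TGD is guarded if some body atom contains all body variables. -/
def TGD.Guarded (t : TGD) : Prop := ∃ a ∈ t.body, ∀ x, x ∈ t.bodyVars → x ∈ a.args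

/-- A TGD is frontier-one if it has exactly one frontier variable. -/
def TGD.FrontierOne (t : TGD) : Prop := t.frontier.length = 1

/-- `I ⊨ ϑ`. -/
def TGD.Satisfies (I : Inst) (t : TGD) : Prop :=
  ∀ g : ℕ → Term, (∀ a ∈ t.body, a.inst g ∈ I) →
    ∃ h : ℕ → Term, (∀ a ∈ t.head, a.inst h ∈ I) ∧ ∀ x ∈ t.frontier, h x = g x

/-- `I` is a model of the set `T` of TGDs. -/
def IsModel (I : Inst) (T : List TGD) : Prop := ∀ t ∈ T, TGD.Satisfies I t

/-- Number of (distinct) variables in the body of a TGD. -/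
def TGD.bodyVarList (t : TGD) : List ℕ := ((t.body.map Atom.args).flatten).dedup

/-- The body width of a set of TGDs. -/
def bodyWidth (T : List TGD) : ℕ := (T.map (fun t => t.bodyVarList.length)).foldr max 0

/-! ### The chase -/

/-- `ϑ` is applicable at tuple `c̄` in `I`. -/
def TGD.Applicable (t : TGD) (I : Inst) (c : List Term) : Prop :=
  (∃ g : ℕ → Term, (∀ a ∈ t.body, a.inst g ∈ I) ∧ t.frontier.map g = c) ∧
  ¬ (∃ h : ℕ → Term, (∀ a ∈ t.head, a.inst h ∈ I) ∧ t.frontier.map h = c)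

/-- `J` is the result of applying `ϑ` in `I` at `c̄`: the head is added, with the
existential variables replaced by distinct fresh nulls. -/
def TGD.StepResult (t : TGD) (I : Inst) (c : List Term) (J : Inst) : Prop :=
  ∃ h : ℕ → Term,
    t.frontier.map h = c ∧
    (∀ x, x ∈ t.headVars → x ∉ t.frontier → (¬ (h x).isConst ∧ h x ∉ adom I)) ∧
    (∀ x y, x ∈ t.headVars → y ∈ t.headVars → x ∉ t.frontier → y ∉ t.frontier →
      h x = h y → x = y) ∧
    J = I ∪ { f | ∃ a ∈ t.head, f = a.inst h }

/-- A chase step from `I` to `J` with some TGD of `T`. -/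
def ChaseStep (T : List TGD) (I J : Inst) : Prop :=
  ∃ t ∈ T, ∃ c, t.Applicable I c ∧ t.StepResult I c J

/-- A chase sequence for `I` with `T` (stalling when no TGD is applicable). -/
def IsChaseSeq (T : List TGD) (I : Inst) (f : ℕ → Inst) : Prop :=
  f 0 = I ∧ ∀ i, ChaseStep T (f i) (f (i+1)) ∨ ((¬ ∃ J, ChaseStep T (f i) J) ∧ f (i+1) = f i)

/-- Fairness: every applicable TGD application is eventually performed or becomes
non-applicable. -/
def IsFair (T : List TGD) (f : ℕ → Inst) : Prop :=
  ∀ i, ∀ t ∈ T, ∀ c, TGD.Applicable t (f i) c →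
    ∃ j, i ≤ j ∧
      ((TGD.Applicable t (f j) c ∧ TGD.StepResult t (f j) c (f (j+1))) ∨
        ¬ TGD.Applicable t (f j) c)

/-- `J` is the result of some fair chase sequence for `I` with `T`. -/
def IsChaseResult (T : List TGD) (I J : Inst) : Prop :=
  ∃ f : ℕ → Inst, IsChaseSeq T I f ∧ IsFair T f ∧ J = ⋃ i, f i

/-- `chase T I`: the result of an arbitrary but fixed fair chase sequence for `I` with `T`. -/
noncomputable def chase (T : List TGD) (I : Inst) : Inst :=
  @dite _ (∃ J, IsChaseResult T I J) (Classical.dec _) (fun h => h.choose) (fun _ => I)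

/-! ### Query answering w.r.t. TGDs and conservativity notions -/

/-- `c̄ ∈ q_T(D)`: `c̄` is a tuple over `adom D` and an answer to `q` on `chase T D`. -/
def AnswerWrt (q : CQ) (T : List TGD) (D : Inst) (c : List Term) : Prop :=
  (∀ x ∈ c, x ∈ adom D) ∧ ∃ h, CQHom q (chase T D) h ∧ q.ans.map h = c

/-- `T2` is `ΣD,ΣQ`-hom-conservative over `T1`. -/
def HomConservative (T1 T2 : List TGD) (SD SQ : Schema) : Prop :=
  ∀ D, IsDatabase D SD → HomTo SQ (chase T2 D) (chase T1 D)

/-- `T2` is `ΣD,ΣQ`-CQ-conservative over `T1`. -/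
def CQConservative (T1 T2 : List TGD) (SD SQ : Schema) : Prop :=
  ∀ D, IsDatabase D SD → ∀ q : CQ, CQ.Over q SQ →
    ∀ c, AnswerWrt q T2 D c → AnswerWrt q T1 D c

/-- `T` is `ΣD,ΣQ`-hom-trivial. -/
def HomTrivial (T : List TGD) (SD SQ : Schema) : Prop :=
  ∀ D, IsDatabase D SD → HomTo SQ (chase T D) D

/-- `T` is `ΣD,ΣQ`-CQ-trivial. -/
def CQTrivial (T : List TGD) (SD SQ : Schema) : Prop :=
  ∀ D, IsDatabase D SD → ∀ q : CQ, CQ.Over q SQ →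
    ∀ c, AnswerWrt q T D c → IsAnswer q D c

/-! ### Auxiliary lemmas -/

private lemma map_eq_self_of_eq {α : Type*} {f : α → α} :
    ∀ {L : List α}, L.map f = L → ∀ t ∈ L, f t = t := by
  intro L
  induction L with
  | nil => intro _ t ht; simp at ht
  | cons a L ih =>
    intro h t ht
    simp only [List.map_cons, List.cons.injEq] at h
    rcases List.mem_cons.mp ht with rfl | ht
    · exact h.1
    · exact ih h.2 t ht

private lemma isConst_elim {t : Term} (h : t.isConst) : ∃ n, t = Term.const n := by
  cases t with
  | const n => exact ⟨n, rfl⟩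
  | null n => exact absurd h (by simp [Term.isConst])

private lemma lists_finite {A : Set Term} (hA : A.Finite) :
    ∀ k : ℕ, {l : List Term | l.length ≤ k ∧ ∀ t ∈ l, t ∈ A}.Finite := by
  intro k
  induction k with
  | zero =>
    apply Set.Finite.subset (Set.finite_singleton ([] : List Term))
    rintro l ⟨hl, -⟩
    simp [List.length_eq_zero_iff.mp (Nat.le_zero.mp hl)]
  | succ k ih =>
    apply Set.Finite.subset
      (Set.Finite.insert [] ((hA.prod ih).image (fun p => p.1 :: p.2)))
    rintro l ⟨hl, hmem⟩
    cases l with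
    | nil => simp
    | cons a l =>
      refine Set.mem_insert_iff.mpr (Or.inr ⟨(a, l), ⟨hmem a (by simp), ?_, ?_⟩, rfl⟩)
      · simpa using Nat.lt_succ_iff.mp (Nat.lt_of_lt_of_le (Nat.lt_succ_self _) hl)
      · exact fun t ht => hmem t (by simp [ht])

/-- Relation symbols occurring in `D` or in a head of a TGD of `T`. -/
def relsOf (D : Inst) (T : List TGD) : Set RelSym :=
  (Fct.rel '' D) ∪ {r | ∃ t ∈ T, ∃ a ∈ t.head, a.rel = r}

private lemma relsOf_finite {D : Inst} (hD : D.Finite) (T : List TGD) :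
    (relsOf D T).Finite := by
  apply Set.Finite.union (hD.image _)
  have hsub : {r | ∃ t ∈ T, ∃ a ∈ t.head, a.rel = r} ⊆
      Atom.rel '' {a | ∃ t ∈ T, a ∈ t.head} := by
    rintro r ⟨t, ht, a, ha, rfl⟩; exact ⟨a, ⟨t, ht, ha⟩, rfl⟩
  apply Set.Finite.subset _ hsub
  apply Set.Finite.image
  have : {a | ∃ t ∈ T, a ∈ t.head} = ⋃ t ∈ T, {a | a ∈ t.head} := by ext; simp
  rw [this]
  exact Set.Finite.biUnion (List.finite_toSet T) (fun t _ => t.head.finite_toSet)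

/-- Invariant of the chase: all facts are well-formed, use a relation symbol from `D`
or a TGD head, and all constants occurring in them occur in `D`. -/
def GoodFact (D : Inst) (T : List TGD) (f : Fct) : Prop :=
  f.wf ∧ f.rel ∈ relsOf D T ∧ ∀ t ∈ f.args, t.isConst → t ∈ adom D

private lemma chase_good {T : List TGD} {D : Inst} (hT : ∀ t ∈ T, t.wf) (hD : IsDB D) :
    ∀ f ∈ chase T D, GoodFact D T f := by
  have hbase : ∀ f ∈ D, GoodFact D T f := by
    intro f hf
    exact ⟨(hD.2 f hf).1, Or.inl ⟨f, hf, rfl⟩, fun t ht _ => ⟨f, hf, ht⟩⟩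
  unfold chase
  split
  case isTrue hex =>
    obtain ⟨seq, ⟨h0, hstep⟩, -, hJ⟩ := hex.choose_spec
    have key : ∀ i, ∀ f ∈ seq i, GoodFact D T f := by
      intro i
      induction i with
      | zero => rw [h0]; exact hbase
      | succ i ih =>
        rcases hstep i with hcs | ⟨-, heq⟩
        · obtain ⟨t, htT, c, ⟨⟨g, hbodyg, hcg⟩, -⟩, hm, hfr, hfresh, -, hnew⟩ := hcs
          rw [hnew]
          rintro f (hf | ⟨a, ha, rfl⟩)
          · exact ih f hf
          · refine ⟨⟨?_, ((hT t htT).2.1 a ha).2⟩, Or.inr ⟨t, htT, a, ha, rfl⟩, ?_⟩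
            · simpa [Atom.inst] using ((hT t htT).2.1 a ha).1
            · intro u hu hc
              simp only [Atom.inst] at hu
              obtain ⟨x, hx, rfl⟩ := List.mem_map.mp hu
              have hxh : x ∈ t.headVars := ⟨a, ha, hx⟩
              by_cases hxf : x ∈ t.frontier
              · have hmc : hm x ∈ c := hfr ▸ List.mem_map_of_mem (f := hm) hxf
                rw [← hcg] at hmc
                obtain ⟨y, hy, hyx⟩ := List.mem_map.mp hmc
                obtain ⟨b, hb, hyb⟩ := (hT t htT).2.2.2.1 y hy
                have hgy : g y ∈ (b.inst g).args := List.mem_map_of_mem (f := g) hyb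
                have hc' : (g y).isConst := by rw [hyx]; exact hc
                have := (ih _ (hbodyg b hb)).2.2 (g y) hgy hc'
                rwa [hyx] at this
              · exact absurd hc (hfresh x hxh hxf).1
        · rw [heq]; exact ih
    rw [hJ]
    rintro f hf
    obtain ⟨_, ⟨i, rfl⟩, hfi⟩ := hf
    exact key i f hfi
  case isFalse => exact hbase

/-- Theorem 4: `T2` is `ΣD,ΣQ`-CQ-conservative over `T1` iff
`chase_{T2}(D) →^lim_{ΣQ} chase_{T1}(D)` for every `ΣD`-database `D`. -/
theorem cq_conservative_iff_homLim (T1 T2 : List TGD) (SD SQ : Schema)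
    (h1 : ∀ t ∈ T1, t.wf) (h2 : ∀ t ∈ T2, t.wf) :
    CQConservative T1 T2 SD SQ ↔
      ∀ D : Inst, IsDatabase D SD → HomLim SQ (chase T2 D) (chase T1 D) := by
  classical
  constructor
  · -- CQ-conservative → HomLim
    intro hcons D hD n _hn A hAsub hAfin _hAcard
    have hgood := chase_good h2 hD.1
    set R : Set Fct := {f | f ∈ chase T2 D ∧ (∀ u ∈ f.args, u ∈ A) ∧ f.rel ∈ SQ} with hRdef
    have hRfin : R.Finite := by
      apply Set.Finite.subset
        (Set.Finite.biUnion (relsOf_finite hD.1.1 T2)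
          (fun r _ => ((lists_finite hAfin r.arity).image (fun l => Fct.mk r l))))
      rintro f ⟨hf, hfA, -⟩
      have hw := hgood f hf
      refine Set.mem_biUnion hw.2.1 ⟨f.args, ⟨le_of_eq hw.1.1, hfA⟩, ?_⟩
      rfl
    set fl : List Fct := hRfin.toFinset.toList with hfldef
    have hfl : ∀ f, f ∈ fl ↔ f ∈ R := by
      intro f; rw [hfldef, Finset.mem_toList, Set.Finite.mem_toFinset]
    set atomOf : Fct → Atom := fun f => ⟨f.rel, f.args.map Encodable.encode⟩ with hatomOf
    set L : List Term := (fl.flatMap Fct.args).filterMap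
      (fun u => match u with | Term.const n => some (Term.const n) | Term.null _ => none)
      with hLdef
    have hmemL : ∀ u, u ∈ L ↔ ((∃ f ∈ fl, u ∈ f.args) ∧ ∃ m, u = Term.const m) := by
      intro u
      rw [hLdef, List.mem_filterMap]
      constructor
      · rintro ⟨v, hv, hvu⟩
        cases v with
        | const m =>
          simp only [Option.some.injEq] at hvu
          exact ⟨by rw [← hvu]; exact List.mem_flatMap.mp hv, m, hvu.symm⟩
        | null m => simp at hvu
      · rintro ⟨hu, m, rfl⟩
        exact ⟨Term.const m, List.mem_flatMap.mpr hu, rfl⟩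
    set q : CQ := ⟨fl.map atomOf, L.map Encodable.encode⟩ with hqdef
    have hqOver : CQ.Over q SQ := by
      rintro a ha
      obtain ⟨f, hf, rfl⟩ := List.mem_map.mp ha
      obtain ⟨hfc, -, hfS⟩ := (hfl f).mp hf
      have hw := hgood f hfc
      exact ⟨hfS, by simpa [hatomOf, Atom.wf] using hw.1.1, hw.1.2⟩
    have g2prop : ∀ t : Term,
        (fun m => (Encodable.decode (α := Term) m).getD (Term.const 0)) (Encodable.encode t) = t := by
      intro t; simp [Encodable.encodek]
    have hansT2 : AnswerWrt q T2 D L := by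
      refine ⟨?_, fun m => (Encodable.decode (α := Term) m).getD (Term.const 0), ?_, ?_⟩
      · intro x hx
        obtain ⟨⟨f, hf, hxf⟩, m, rfl⟩ := (hmemL x).mp hx
        exact (hgood f ((hfl f).mp hf).1).2.2 _ hxf trivial
      · rintro a ha
        obtain ⟨f, hf, rfl⟩ := List.mem_map.mp ha
        have : (atomOf f).inst (fun m => (Encodable.decode (α := Term) m).getD (Term.const 0)) = f := by
          cases f with
          | mk r args =>
            simp only [hatomOf, Atom.inst, List.map_map]
            congr 1
            exact (List.map_congr_left (fun u _ => g2prop u)).trans (List.map_id _)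
        rw [this]
        exact ((hfl f).mp hf).1
      · show (L.map Encodable.encode).map _ = L
        rw [List.map_map]
        exact (List.map_congr_left (fun u _ => g2prop u)).trans (List.map_id _)
    obtain ⟨-, g1, hg1, hans1⟩ := hcons D hD q hqOver L hansT2
    have hg1L : ∀ u ∈ L, g1 (Encodable.encode u) = u := by
      intro u hu
      have : L.map (g1 ∘ Encodable.encode) = L := by
        rw [← List.map_map]; exact hans1
      exact map_eq_self_of_eq this u hu
    refine ⟨fun u => match u with
      | Term.const n => Term.const n
      | Term.null m => g1 (Encodable.encode (Term.null m)), fun n => rfl, ?_⟩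
    rintro f ⟨hfc, hfA⟩ hfS
    have hfR : f ∈ fl := (hfl f).mpr ⟨hfc, hfA, hfS⟩
    have hmem : (atomOf f).inst g1 ∈ chase T1 D := hg1 _ (List.mem_map_of_mem (f := atomOf) hfR)
    have : f.map (fun u => match u with
        | Term.const n => Term.const n
        | Term.null m => g1 (Encodable.encode (Term.null m))) = (atomOf f).inst g1 := by
      simp only [Fct.map, hatomOf, Atom.inst, List.map_map]
      congr 1
      apply List.map_congr_left
      intro u hu
      cases u with
      | const m =>
        exact (hg1L _ ((hmemL (Term.const m)).mpr ⟨⟨f, hfR, hu⟩, m, rfl⟩)).symm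
      | null m => rfl
    rw [this]
    exact hmem
  · -- HomLim → CQ-conservative
    intro hlim D hD q hq c hc
    obtain ⟨hcadom, h, hh, hans⟩ := hc
    set A : Set Term := {u | ∃ a ∈ q.atoms, ∃ x ∈ a.args, u = h x} with hAdef
    have hAsub : A ⊆ adom (chase T2 D) := by
      rintro u ⟨a, ha, x, hx, rfl⟩
      exact ⟨a.inst h, hh a ha, List.mem_map_of_mem (f := h) hx⟩
    have hAfin : A.Finite := by
      have hsub : A ⊆ h '' {x | ∃ a ∈ q.atoms, x ∈ a.args} := by
        rintro u ⟨a, ha, x, hx, rfl⟩; exact ⟨x, ⟨a, ha, hx⟩, rfl⟩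
      refine Set.Finite.subset (Set.Finite.image h ?_) hsub
      have : {x | ∃ a ∈ q.atoms, x ∈ a.args} = ⋃ a ∈ q.atoms, {x | x ∈ a.args} := by
        ext; simp
      rw [this]
      exact Set.Finite.biUnion (q.atoms.finite_toSet) (fun a _ => a.args.finite_toSet)
    obtain ⟨g, hgdb, hghom⟩ :=
      hlim D hD (max A.ncard 1) (le_max_right _ _) A hAsub hAfin (le_max_left _ _)
    refine ⟨hcadom, g ∘ h, ?_, ?_⟩
    · intro a ha
      have h1 : a.inst h ∈ restrict (chase T2 D) A := by
        refine ⟨hh a ha, ?_⟩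
        rintro u hu
        obtain ⟨x, hx, rfl⟩ := List.mem_map.mp hu
        exact ⟨a, ha, x, hx, rfl⟩
      have := hghom _ h1 (hq a ha).1
      simpa [Fct.map, Atom.inst, List.map_map] using this
    · have step : q.ans.map (g ∘ h) = c.map g := by
        rw [← hans, List.map_map]
      rw [step]
      have : ∀ x ∈ c, g x = x := by
        intro x hx
        obtain ⟨f, hf, hxf⟩ := hcadom x hx
        obtain ⟨m, rfl⟩ := isConst_elim ((hD.1.2 f hf).2 x hxf)
        exact hgdb m
      exact (List.map_congr_left this).trans (by simp)
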